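/- Let t ≥ 1 be a natural number and let R : (Fin t → ℝ) → ℝ. Then R is permutation invariant (i.e., R(x ∘ σ) = R(x) for every x : Fin t → ℝ and every permutation σ of Fin t) if and only if there exists a function R̂ : (ℝ → ℝ) → ℝ such that R(x) = R̂(F̂_t(x)) for every x : Fin t → ℝ, where F̂_t(x) is the empirical distribution of x. -/

import Mathlib

/-- The empirical distribution of `x : Fin t → ℝ`:
`F̂_t(x)(y) = (1/t) · #{ s : x s ≤ y }`. -/
noncomputable def empDist (t : ℕ) (x : Fin t → ℝ) : ℝ → ℝ :=
  fun y => ((Finset.univ.filter (fun s : Fin t => x s ≤ y)).card : ℝ) / t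

open Finset

private lemma multiset_eq_of_card_le_eq (t : ℕ) (x x' : Fin t → ℝ)
    (hy : ∀ y : ℝ, (univ.filter (fun s => x s ≤ y)).card
        = (univ.filter (fun s => x' s ≤ y)).card) :
    Multiset.map x Finset.univ.val = Multiset.map x' Finset.univ.val := by
  have key : ∀ a : ℝ, (univ.filter (fun s => a = x s)).card
      = (univ.filter (fun s => a = x' s)).card := by
    intro a
    set S := ((Finset.image x univ) ∪ (Finset.image x' univ)).filter (· < a) with hS
    by_cases hne : S.Nonempty
    · set b := S.max' hne with hb
      have hbS : b ∈ S := S.max'_mem hne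
      have hba : b < a := (Finset.mem_filter.mp hbS).2
      have step : ∀ z : Fin t → ℝ, (z = x ∨ z = x') →
          (univ.filter (fun s => a = z s)) =
            (univ.filter (fun s => z s ≤ a)) \ (univ.filter (fun s => z s ≤ b)) := by
        intro z hz
        ext s
        simp only [Finset.mem_filter, Finset.mem_sdiff, Finset.mem_univ, true_and]
        constructor
        · rintro rfl
          exact ⟨le_refl _, fun hle => absurd (lt_of_le_of_lt hle hba) (lt_irrefl _)⟩
        · rintro ⟨h1, h2⟩
          rcases lt_or_eq_of_le h1 with hlt | rfl
          · exfalso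
            apply h2
            apply S.le_max'
            rw [hS, Finset.mem_filter]
            refine ⟨Finset.mem_union.mpr ?_, hlt⟩
            rcases hz with rfl | rfl
            · exact Or.inl (Finset.mem_image_of_mem z (Finset.mem_univ s))
            · exact Or.inr (Finset.mem_image_of_mem z (Finset.mem_univ s))
          · rfl
      have subx : ∀ z : Fin t → ℝ, (univ.filter (fun s => z s ≤ b)) ⊆ (univ.filter (fun s => z s ≤ a)) := by
        intro z s hs
        simp only [Finset.mem_filter, Finset.mem_univ, true_and] at hs ⊢
        exact hs.trans hba.le
      rw [step x (Or.inl rfl), step x' (Or.inr rfl),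
        Finset.card_sdiff_of_subset (subx x), Finset.card_sdiff_of_subset (subx x'), hy a, hy b]
    · have step : ∀ z : Fin t → ℝ, (z = x ∨ z = x') →
          (univ.filter (fun s => a = z s)) = (univ.filter (fun s => z s ≤ a)) := by
        intro z hz
        ext s
        simp only [Finset.mem_filter, Finset.mem_univ, true_and]
        constructor
        · rintro rfl; exact le_refl _
        · intro h1
          rcases lt_or_eq_of_le h1 with hlt | rfl
          · exfalso
            apply hne
            refine ⟨z s, ?_⟩
            rw [hS, Finset.mem_filter]
            refine ⟨Finset.mem_union.mpr ?_, hlt⟩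
            rcases hz with rfl | rfl
            · exact Or.inl (Finset.mem_image_of_mem z (Finset.mem_univ s))
            · exact Or.inr (Finset.mem_image_of_mem z (Finset.mem_univ s))
          · rfl
      rw [step x (Or.inl rfl), step x' (Or.inr rfl), hy a]
  ext a
  rw [Multiset.count_map, Multiset.count_map, ← Finset.filter_val, ← Finset.filter_val]
  exact key a

private lemma exists_perm_of_multiset_eq (n : ℕ) (x x' : Fin n → ℝ)
    (h : Multiset.map x Finset.univ.val = Multiset.map x' Finset.univ.val) :
    ∃ σ : Equiv.Perm (Fin n), x ∘ σ = x' := by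
  have h1 : List.Perm (List.ofFn (x ∘ Tuple.sort x)) (List.ofFn (x' ∘ Tuple.sort x')) := by
    rw [← Multiset.coe_eq_coe]
    have e1 := (Tuple.sort x).ofFn_comp_perm x
    have e2 := (Tuple.sort x').ofFn_comp_perm x'
    rw [← Multiset.coe_eq_coe] at e1 e2
    rw [e1, e2]
    have : ∀ f : Fin n → ℝ, (↑(List.ofFn f) : Multiset ℝ) = Multiset.map f Finset.univ.val := by
      intro f
      simp [List.ofFn_eq_map, ← Multiset.map_coe]
    rw [this, this, h]
  have heq : x ∘ Tuple.sort x = x' ∘ Tuple.sort x' :=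
    List.ofFn_injective <| List.Perm.eq_of_sortedLE
      (Tuple.monotone_sort x).sortedLE_ofFn (Tuple.monotone_sort x').sortedLE_ofFn h1
  refine ⟨(Tuple.sort x')⁻¹.trans (Tuple.sort x), funext fun i => ?_⟩
  have := congrFun heq ((Tuple.sort x')⁻¹ i)
  simpa using this

/-- A function `R` on reward sequences of length `t ≥ 1` is permutation invariant
iff it factors through the empirical distribution. -/
theorem permutation_invariant_iff_factors_through_empirical_distribution
    (t : ℕ) (ht : 1 ≤ t) (R : (Fin t → ℝ) → ℝ) :
    (∀ (x : Fin t → ℝ) (σ : Equiv.Perm (Fin t)), R (x ∘ σ) = R x) ↔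
      (∃ Rhat : (ℝ → ℝ) → ℝ, ∀ x : Fin t → ℝ, R x = Rhat (empDist t x)) := by
  constructor
  · intro hinv
    classical
    refine ⟨fun F => if h : ∃ x, empDist t x = F then R h.choose else 0, fun x => ?_⟩
    have h : ∃ x', empDist t x' = empDist t x := ⟨x, rfl⟩
    simp only []
    rw [dif_pos h]
    have hch : empDist t h.choose = empDist t x := h.choose_spec
    -- equal card-filters
    have hc : ∀ y : ℝ, (univ.filter (fun s => h.choose s ≤ y)).card
        = (univ.filter (fun s => x s ≤ y)).card := by
      intro y
      have := congrFun hch y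
      unfold empDist at this
      have ht0 : (t : ℝ) ≠ 0 := by positivity
      field_simp at this
      exact_mod_cast this
    obtain ⟨σ, hσ⟩ := exists_perm_of_multiset_eq t h.choose x
      (multiset_eq_of_card_le_eq t h.choose x hc)
    have h2 := hinv h.choose σ
    rw [hσ] at h2
    exact h2
  · rintro ⟨Rhat, hR⟩ x σ
    rw [hR x, hR (x ∘ σ)]
    congr 1
    funext y
    unfold empDist
    congr 1
    norm_cast
    apply Finset.card_nbij (fun s => σ s)
    · intro s hs
      simp only [Finset.mem_coe, Finset.mem_filter, Finset.mem_univ, true_and,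
        Function.comp_apply] at hs ⊢
      exact hs
    · intro a _ b _ hab
      exact σ.injective hab
    · intro a ha
      refine ⟨σ⁻¹ a, ?_, by simp⟩
      simp only [Finset.mem_coe, Finset.mem_filter, Finset.mem_univ, true_and,
        Function.comp_apply] at ha ⊢
      simpa using ha
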